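/- Let G = (V,E) be a connected, infinite, locally finite graph and m : V → [0,1] a function with ∑_{v∈V} m(v) = 1 and finite support. Define Q := ∑_{v∈V} m(v)² and 𝓔 := ∑_{{u,v}∈E} (m(u) - m(v))². Then 𝓔 ≥ Q³/8. -/
import Mathlib

open Function Set

private lemma getVert_injOn_aux {V : Type*} {G : SimpleGraph V} {u v : V} (p : G.Walk u v)
    (hp : p.IsPath) :
    ∀ i ≤ p.length, ∀ j ≤ p.length, p.getVert i = p.getVert j → i = j := by
  induction p with
  | nil => intro i hi j hj _; simp at hi hj; omega
  | @cons a b c hadj q ih =>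
    rw [SimpleGraph.Walk.cons_isPath_iff] at hp
    intro i hi j hj hij
    simp only [SimpleGraph.Walk.length_cons] at hi hj
    match i, j with
    | 0, 0 => rfl
    | 0, j+1 =>
      exfalso
      apply hp.2
      rw [SimpleGraph.Walk.mem_support_iff_exists_getVert]
      refine ⟨j, ?_, by omega⟩
      simp only [SimpleGraph.Walk.getVert_zero, SimpleGraph.Walk.getVert_cons_succ] at hij
      exact hij.symm
    | i+1, 0 =>
      exfalso
      apply hp.2
      rw [SimpleGraph.Walk.mem_support_iff_exists_getVert]
      refine ⟨i, ?_, by omega⟩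
      simp only [SimpleGraph.Walk.getVert_zero, SimpleGraph.Walk.getVert_cons_succ] at hij
      exact hij
    | i+1, j+1 =>
      simp only [SimpleGraph.Walk.getVert_cons_succ] at hij
      have := ih hp.1 i (by omega) j (by omega) hij
      omega

theorem stmt_4 {V : Type*} [Infinite V]
    (G : SimpleGraph V) (hconn : G.Connected) (hlf : G.LocallyFinite)
    (m : V → ℝ) (hm0 : ∀ v, 0 ≤ m v) (hm1 : ∀ v, m v ≤ 1)
    (hfin : (Function.support m).Finite)
    (hsum : ∑ᶠ v, m v = 1) :
    (∑ᶠ v, (m v)^2)^3 / 8 ≤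
      ∑ᶠ e ∈ G.edgeSet,
        Sym2.lift ⟨fun u v => (m u - m v)^2, fun u v => by ring⟩ e := by
  classical
  set F : Sym2 V → ℝ := Sym2.lift ⟨fun u v => (m u - m v)^2, fun u v => by ring⟩ with hF
  have hFnonneg : ∀ e, 0 ≤ F e := by
    intro e
    induction e with
    | _ a b => simp [hF, sq_nonneg]
  set s : Finset V := hfin.toFinset with hs
  have hsum' : ∑ v ∈ s, m v = 1 := by
    rw [← hsum, finsum_eq_sum m hfin]
  have hsupsq : Function.support (fun v => (m v)^2) ⊆ ↑s := by
    intro v hv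
    simp only [Function.mem_support] at hv
    simp only [hs, Set.Finite.coe_toFinset, Function.mem_support]
    intro h0
    exact hv (by rw [h0]; ring)
  have hQeq : ∑ᶠ v, (m v)^2 = ∑ v ∈ s, (m v)^2 :=
    finsum_eq_sum_of_support_subset _ hsupsq
  rw [hQeq]
  set Q : ℝ := ∑ v ∈ s, (m v)^2 with hQ
  -- Q > 0
  have hsne : s.Nonempty := by
    by_contra h
    rw [Finset.not_nonempty_iff_eq_empty] at h
    rw [h] at hsum'
    simp at hsum'
  have hQpos : 0 < Q := by
    obtain ⟨v, hv⟩ := hsne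
    have hvne : m v ≠ 0 := by
      simpa [hs] using hv
    have h1 : (m v)^2 ≤ Q := Finset.single_le_sum (fun i _ => sq_nonneg (m i)) hv
    have h2 : 0 < (m v)^2 := by positivity
    linarith
  -- max vertex
  obtain ⟨v0, hv0s, hv0max⟩ := s.exists_max_image m hsne
  have hQle : Q ≤ m v0 := by
    calc Q = ∑ v ∈ s, (m v)^2 := rfl
    _ ≤ ∑ v ∈ s, m v * m v0 := by
        apply Finset.sum_le_sum
        intro i hi
        rw [sq]
        exact mul_le_mul_of_nonneg_left (hv0max i hi) (hm0 i)
    _ = (∑ v ∈ s, m v) * m v0 := by rw [Finset.sum_mul]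
    _ = m v0 := by rw [hsum', one_mul]
  -- the big set
  set S : Finset V := s.filter (fun v => Q/2 ≤ m v) with hS
  have hv0S : v0 ∈ S := by
    rw [hS, Finset.mem_filter]
    exact ⟨hv0s, by linarith⟩
  have hcardS : (S.card : ℝ) * (Q/2) ≤ 1 := by
    have h1 : S.card • (Q/2) ≤ ∑ v ∈ S, m v := by
      apply Finset.card_nsmul_le_sum
      intro i hi
      rw [hS, Finset.mem_filter] at hi
      exact hi.2
    have h2 : ∑ v ∈ S, m v ≤ ∑ v ∈ s, m v := by
      apply Finset.sum_le_sum_of_subset_of_nonneg (Finset.filter_subset _ _)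
      intro i _ _
      exact hm0 i
    rw [nsmul_eq_mul] at h1
    linarith
  have hcardS' : (S.card : ℝ) ≤ 2 / Q := by
    rw [le_div_iff₀ hQpos]
    linarith
  -- pick vertex outside S, get a path
  obtain ⟨w, hw⟩ := Infinite.exists_notMem_finset S
  obtain ⟨p0⟩ := hconn v0 w
  obtain ⟨p, hp⟩ := p0.toPath
  -- first exit index
  have hex : ∃ n, p.getVert n ∉ S := ⟨p.length, by rwa [SimpleGraph.Walk.getVert_length]⟩
  set N : ℕ := Nat.find hex with hN
  have hNspec : p.getVert N ∉ S := Nat.find_spec hex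
  have hNle : N ≤ p.length := Nat.find_le (by rwa [SimpleGraph.Walk.getVert_length])
  have hNmem : ∀ i < N, p.getVert i ∈ S := by
    intro i hi
    have := Nat.find_min hex hi
    simpa using this
  have hN1 : 1 ≤ N := by
    rcases Nat.eq_zero_or_pos N with h | h
    · exfalso; apply hNspec; rw [h, SimpleGraph.Walk.getVert_zero]; exact hv0S
    · exact h
  have hinj := getVert_injOn_aux p hp
  have hNcard : N ≤ S.card := by
    have : ((Finset.range N).image (fun i => p.getVert i)).card = N := by
      rw [Finset.card_image_of_injOn, Finset.card_range]
      intro i hi j hj hij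
      rw [Finset.mem_coe, Finset.mem_range] at hi hj
      exact hinj i (by omega) j (by omega) hij
    rw [← this]
    apply Finset.card_le_card
    intro x hx
    rw [Finset.mem_image] at hx
    obtain ⟨i, hi, rfl⟩ := hx
    exact hNmem i (Finset.mem_range.mp hi)
  -- the drop
  have htel : ∑ i ∈ Finset.range N, (m (p.getVert i) - m (p.getVert (i+1)))
      = m (p.getVert 0) - m (p.getVert N) := Finset.sum_range_sub' (fun i => m (p.getVert i)) N
  have hlast : m (p.getVert N) < Q / 2 := by
    by_contra h
    push_neg at h
    apply hNspec
    rw [hS, Finset.mem_filter]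
    refine ⟨?_, h⟩
    simp only [hs, Set.Finite.mem_toFinset, Function.mem_support]
    intro h0
    rw [h0] at h
    linarith
  have hdrop : Q / 2 ≤ ∑ i ∈ Finset.range N, (m (p.getVert i) - m (p.getVert (i+1))) := by
    rw [htel, SimpleGraph.Walk.getVert_zero]
    linarith
  -- Cauchy-Schwarz
  have hCS := sq_sum_le_card_mul_sum_sq (s := Finset.range N)
    (f := fun i => m (p.getVert i) - m (p.getVert (i+1)))
  rw [Finset.card_range] at hCS
  set Sd : ℝ := ∑ i ∈ Finset.range N, (m (p.getVert i) - m (p.getVert (i+1)))^2 with hSd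
  have hSdnonneg : 0 ≤ Sd := Finset.sum_nonneg (fun i _ => sq_nonneg _)
  have hkey : Q^3 / 8 ≤ Sd := by
    have h1 : (Q/2)^2 ≤ (N : ℝ) * Sd := by
      have : (Q/2)^2 ≤ (∑ i ∈ Finset.range N, (m (p.getVert i) - m (p.getVert (i+1))))^2 := by
        apply sq_le_sq'
        · nlinarith
        · exact hdrop
      linarith
    have h2 : (N : ℝ) ≤ 2 / Q := le_trans (by exact_mod_cast hNcard) hcardS'
    have h3 : (Q/2)^2 ≤ (2/Q) * Sd := by
      calc (Q/2)^2 ≤ (N : ℝ) * Sd := h1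
      _ ≤ (2/Q) * Sd := mul_le_mul_of_nonneg_right h2 hSdnonneg
    have hQne : Q ≠ 0 := ne_of_gt hQpos
    rw [div_mul_eq_mul_div, le_div_iff₀ hQpos] at h3
    nlinarith
  -- edges of the path
  set f : ℕ → Sym2 V := fun i => s(p.getVert i, p.getVert (i+1)) with hf
  have hfinj : Set.InjOn f (Finset.range N) := by
    intro i hi j hj hij
    rw [Finset.mem_coe, Finset.mem_range] at hi hj
    rw [hf, Sym2.eq_iff] at hij
    rcases hij with ⟨h1, _⟩ | ⟨h1, h2⟩
    · exact hinj i (by omega) j (by omega) h1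
    · have e1 : i = j + 1 := hinj i (by omega) (j+1) (by omega) h1
      have e2 : i + 1 = j := hinj (i+1) (by omega) j (by omega) h2
      omega
  set E0 : Finset (Sym2 V) := (Finset.range N).image f with hE0
  have hE0sum : ∑ e ∈ E0, F e = Sd := by
    rw [hE0, Finset.sum_image (fun i hi j hj => hfinj hi hj)]
    apply Finset.sum_congr rfl
    intro i _
    simp [hf, hF]
  have hE0edge : ↑E0 ⊆ G.edgeSet := by
    intro e he
    rw [Finset.coe_image] at he
    obtain ⟨i, hi, rfl⟩ := he
    rw [Finset.mem_coe, Finset.mem_range] at hi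
    exact p.adj_getVert_succ (by omega)
  -- finiteness of edge support
  have hfinE : (G.edgeSet ∩ Function.support F).Finite := by
    apply Set.Finite.subset (Set.Finite.biUnion hfin
      (fun v _ => ((Set.toFinite (G.neighborSet v)).image (fun w => s(v, w)))))
    rintro e ⟨he, hsupp⟩
    induction e with
    | _ a b =>
      rw [Function.mem_support, hF, Sym2.lift_mk] at hsupp
      have hab : m a ≠ m b := by
        intro h
        apply hsupp
        show (m a - m b)^2 = 0
        rw [h]; ring
      have hadj : G.Adj a b := he
      rcases ne_or_eq (m a) 0 with ha | ha
      · exact Set.mem_biUnion ha ⟨b, hadj, rfl⟩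
      · have hb : m b ≠ 0 := fun h => hab (by rw [ha, h])
        exact Set.mem_biUnion hb ⟨a, hadj.symm, Sym2.eq_swap⟩
  -- rewrite the finsum
  set T : Finset (Sym2 V) := hfinE.toFinset ∪ E0 with hT
  have hTeq : ∑ᶠ e ∈ G.edgeSet, F e = ∑ e ∈ T, F e := by
    apply finsum_mem_eq_sum_of_subset
    · intro e he
      rw [Finset.coe_union, Set.Finite.coe_toFinset]
      exact Or.inl he
    · intro e he
      rw [hT, Finset.coe_union, Set.Finite.coe_toFinset] at he
      rcases he with he | he
      · exact he.1
      · exact hE0edge he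
  rw [hTeq]
  have hfinal : ∑ e ∈ E0, F e ≤ ∑ e ∈ T, F e := by
    apply Finset.sum_le_sum_of_subset_of_nonneg
    · rw [hT]; exact Finset.subset_union_right
    · intro e _ _; exact hFnonneg e
  rw [hE0sum] at hfinal
  linarith
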